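/- Let S ⊂ Z be a finite step set with min S = -b, max S = a, and weights ω_s. The generating function W(t,u) of non-negative walks, counting length by t and final height by u, satisfies the functional equation u^b (1 - t P(u)) W(t,u) = u^b - t ∑_{h=1}^{b} u^{b-h} ∑_{i∈S, j≥0, i+j=-h} ω_i W_j(t), where P(u) = ∑_{s∈S} ω_s u^s and W_j is the generating function of non-negative walks ending at height j. -/

import Mathlib

open scoped Classical

/-- Partial sum of the first `m` steps of a walk `f : Fin n → ℤ`. -/
def psum {n : ℕ} (f : Fin n → ℤ) (m : ℕ) : ℤ :=
  ∑ i ∈ Finset.univ.filter (fun i : Fin n => (i : ℕ) < m), f i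

/-- Non-negative walks of length `n` with steps in `S`. -/
noncomputable def walkSet (S : Finset ℤ) (n : ℕ) : Finset (Fin n → ℤ) :=
  (Fintype.piFinset fun _ : Fin n => S).filter fun f => ∀ m : ℕ, 0 ≤ psum f m

/-- `W_j(t)`: weighted generating function of non-negative walks ending at height `j`. -/
noncomputable def Wh {K : Type*} [Field K] (S : Finset ℤ) (ω : ℤ → K) (j : ℤ) :
    PowerSeries K :=
  PowerSeries.mk fun n =>
    ∑ f ∈ (walkSet S n).filter (fun f => psum f n = j), ∏ i, ω (f i)

/-- `W(t,u)`: generating function of non-negative walks, `t` marking length and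
`u` (the polynomial variable) marking the final height. -/
noncomputable def Wfull {K : Type*} [Field K] (S : Finset ℤ) (ω : ℤ → K) :
    PowerSeries (Polynomial K) :=
  PowerSeries.mk fun n =>
    ∑ f ∈ walkSet S n, Polynomial.C (∏ i, ω (f i)) * Polynomial.X ^ (psum f n).toNat

lemma psum_eq_ite {n : ℕ} (f : Fin n → ℤ) (m : ℕ) :
    psum f m = ∑ i : Fin n, if (i : ℕ) < m then f i else 0 := by
  rw [psum, Finset.sum_filter]

lemma psum_of_le {n : ℕ} (f : Fin n → ℤ) {m : ℕ} (h : n ≤ m) :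
    psum f m = ∑ i, f i := by
  rw [psum]
  congr 1
  apply Finset.filter_true_of_mem
  intro i _
  exact lt_of_lt_of_le i.isLt h

lemma psum_snoc {n : ℕ} (g : Fin n → ℤ) (s : ℤ) (m : ℕ) :
    psum (Fin.snoc g s) m = psum g m + if n < m then s else 0 := by
  rw [psum_eq_ite, psum_eq_ite, Fin.sum_univ_castSucc]
  simp

lemma mem_walkSet {S : Finset ℤ} {n : ℕ} {f : Fin n → ℤ} :
    f ∈ walkSet S n ↔ (∀ i, f i ∈ S) ∧ ∀ m, 0 ≤ psum f m := by
  simp [walkSet, Fintype.mem_piFinset]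

lemma psum_nonneg_of_mem {S : Finset ℤ} {n : ℕ} {f : Fin n → ℤ}
    (hf : f ∈ walkSet S n) (m : ℕ) : 0 ≤ psum f m :=
  (mem_walkSet.1 hf).2 m

lemma snoc_mem_walkSet {S : Finset ℤ} {n : ℕ} {g : Fin n → ℤ} {s : ℤ} :
    Fin.snoc g s ∈ walkSet S (n + 1) ↔ g ∈ walkSet S n ∧ s ∈ S ∧ 0 ≤ psum g n + s := by
  rw [mem_walkSet, mem_walkSet]
  constructor
  · rintro ⟨h1, h2⟩
    have hgn : ∀ m, 0 ≤ psum g m := by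
      intro m
      rcases le_or_gt m n with hm | hm
      · have := h2 m
        rwa [psum_snoc, if_neg (by omega), add_zero] at this
      · have := h2 n
        rw [psum_snoc, if_neg (by omega), add_zero] at this
        rw [psum_of_le g hm.le, ← psum_of_le g (le_refl n)]
        exact this
    refine ⟨⟨fun i => ?_, hgn⟩, ?_, ?_⟩
    · have := h1 i.castSucc
      rwa [Fin.snoc_castSucc] at this
    · have := h1 (Fin.last n)
      rwa [Fin.snoc_last] at this
    · have := h2 (n + 1)
      rwa [psum_snoc, if_pos (by omega), psum_of_le g (Nat.le_succ n),
        ← psum_of_le g (le_refl n)] at this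
  · rintro ⟨⟨h1, h2⟩, hs, hns⟩
    constructor
    · intro i
      refine Fin.lastCases ?_ ?_ i
      · rwa [Fin.snoc_last]
      · intro j
        rw [Fin.snoc_castSucc]
        exact h1 j
    · intro m
      rw [psum_snoc]
      rcases le_or_gt m n with hm | hm
      · rw [if_neg (by omega), add_zero]
        exact h2 m
      · rw [if_pos hm, psum_of_le g hm.le, ← psum_of_le g (le_refl n)]
        exact hns

lemma sum_walkSet_succ {M : Type*} [AddCommMonoid M] (S : Finset ℤ) (n : ℕ)
    (F : (Fin (n + 1) → ℤ) → M) :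
    ∑ f ∈ walkSet S (n + 1), F f =
      ∑ g ∈ walkSet S n, ∑ s ∈ S.filter (fun s => 0 ≤ psum g n + s), F (Fin.snoc g s) := by
  rw [Finset.sum_sigma']
  refine Finset.sum_nbij' (fun f => ⟨Fin.init f, f (Fin.last n)⟩)
    (fun p => Fin.snoc p.1 p.2) ?_ ?_ ?_ ?_ ?_
  · intro f hf
    rw [← Fin.snoc_init_self f] at hf
    rw [snoc_mem_walkSet] at hf
    simp only [Finset.mem_sigma, Finset.mem_filter]
    exact ⟨hf.1, hf.2.1, hf.2.2⟩
  · rintro ⟨g, s⟩ hp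
    simp only [Finset.mem_sigma, Finset.mem_filter] at hp
    exact snoc_mem_walkSet.2 ⟨hp.1, hp.2.1, hp.2.2⟩
  · intro f _
    exact Fin.snoc_init_self f
  · rintro ⟨g, s⟩ _
    simp [Fin.init_snoc]
  · intro f _
    rw [Fin.snoc_init_self f]

lemma prod_snoc {K : Type*} [CommRing K] (ω : ℤ → K) {n : ℕ} (g : Fin n → ℤ) (s : ℤ) :
    ∏ i : Fin (n + 1), ω ((Fin.snoc g s : Fin (n + 1) → ℤ) i) = (∏ i, ω (g i)) * ω s := by
  rw [Fin.prod_univ_castSucc]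
  simp

lemma psum_snoc_top {n : ℕ} (g : Fin n → ℤ) (s : ℤ) :
    psum (Fin.snoc g s) (n + 1) = psum g n + s := by
  rw [psum_snoc, if_pos (Nat.lt_succ_self n), psum_of_le g (Nat.le_succ n),
    ← psum_of_le g (le_refl n)]

lemma ite_sum {α M : Type*} [AddCommMonoid M] (c : Prop) [Decidable c] (s : Finset α)
    (f : α → M) : (if c then ∑ x ∈ s, f x else 0) = ∑ x ∈ s, if c then f x else 0 := by
  split_ifs <;> simp

lemma key_lemma {K : Type*} [Field K] (S : Finset ℤ) (ω : ℤ → K) (b n : ℕ)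
    (hrange : ∀ s ∈ S, -(b : ℤ) ≤ s) :
    (∑ s ∈ S, Polynomial.C (ω s) * Polynomial.X ^ ((b : ℤ) + s).toNat) *
        (∑ g ∈ walkSet S n, Polynomial.C (∏ i, ω (g i)) * Polynomial.X ^ (psum g n).toNat)
      - Polynomial.X ^ b *
        (∑ f ∈ walkSet S (n + 1),
          Polynomial.C (∏ i, ω (f i)) * Polynomial.X ^ (psum f (n + 1)).toNat) =
    ∑ h ∈ Finset.Icc 1 b, Polynomial.X ^ (b - h) *
      Polynomial.C (∑ i ∈ S.filter (fun i => i ≤ -(h : ℤ)),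
        ω i * ∑ g ∈ (walkSet S n).filter (fun g => psum g n = -(h : ℤ) - i),
          ∏ j, ω (g j)) := by
  have e1 : (∑ s ∈ S, Polynomial.C (ω s) * Polynomial.X ^ ((b : ℤ) + s).toNat) *
      (∑ g ∈ walkSet S n, Polynomial.C (∏ i, ω (g i)) * Polynomial.X ^ (psum g n).toNat) =
      ∑ g ∈ walkSet S n, ∑ s ∈ S,
        Polynomial.C ((∏ i, ω (g i)) * ω s) *
          Polynomial.X ^ ((b : ℤ) + s + psum g n).toNat := by
    rw [Finset.sum_mul_sum, Finset.sum_comm]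
    refine Finset.sum_congr rfl fun g hg => Finset.sum_congr rfl fun s hs => ?_
    have h1 : 0 ≤ psum g n := psum_nonneg_of_mem hg n
    have h2 := hrange s hs
    have hexp : ((b : ℤ) + s).toNat + (psum g n).toNat = ((b : ℤ) + s + psum g n).toNat := by
      omega
    rw [← hexp, pow_add, map_mul]
    ring
  have e2 : Polynomial.X ^ b *
      (∑ f ∈ walkSet S (n + 1),
        Polynomial.C (∏ i, ω (f i)) * Polynomial.X ^ (psum f (n + 1)).toNat) =
      ∑ g ∈ walkSet S n, ∑ s ∈ S.filter (fun s => 0 ≤ psum g n + s),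
        Polynomial.C ((∏ i, ω (g i)) * ω s) *
          Polynomial.X ^ ((b : ℤ) + s + psum g n).toNat := by
    rw [sum_walkSet_succ, Finset.mul_sum]
    refine Finset.sum_congr rfl fun g hg => ?_
    rw [Finset.mul_sum]
    refine Finset.sum_congr rfl fun s hs => ?_
    rw [Finset.mem_filter] at hs
    have hexp : b + (psum g n + s).toNat = ((b : ℤ) + s + psum g n).toNat := by
      have := hs.2
      omega
    rw [prod_snoc, psum_snoc_top, ← hexp, pow_add]
    ring
  rw [e1, e2, ← Finset.sum_sub_distrib]
  have e3 : ∀ g ∈ walkSet S n,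
      (∑ s ∈ S, Polynomial.C ((∏ i, ω (g i)) * ω s) *
          Polynomial.X ^ ((b : ℤ) + s + psum g n).toNat)
        - ∑ s ∈ S.filter (fun s => 0 ≤ psum g n + s),
            Polynomial.C ((∏ i, ω (g i)) * ω s) *
              Polynomial.X ^ ((b : ℤ) + s + psum g n).toNat =
      ∑ s ∈ S, if ¬ (0 ≤ psum g n + s) then
          Polynomial.C ((∏ i, ω (g i)) * ω s) *
            Polynomial.X ^ ((b : ℤ) + s + psum g n).toNat else 0 := by
    intro g _
    rw [← Finset.sum_filter_add_sum_filter_not S (fun s => 0 ≤ psum g n + s), ← Finset.sum_filter]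
    ring
  rw [Finset.sum_congr rfl e3]
  -- now rework the RHS
  have e4 : ∑ h ∈ Finset.Icc 1 b, Polynomial.X ^ (b - h) *
      Polynomial.C (∑ i ∈ S.filter (fun i => i ≤ -(h : ℤ)),
        ω i * ∑ g ∈ (walkSet S n).filter (fun g => psum g n = -(h : ℤ) - i),
          ∏ j, ω (g j)) =
      ∑ g ∈ walkSet S n, ∑ i ∈ S, ∑ h ∈ Finset.Icc 1 b,
        if (i ≤ -(h : ℤ) ∧ psum g n = -(h : ℤ) - i) then
          Polynomial.X ^ (b - h) * Polynomial.C (ω i * ∏ j, ω (g j)) else 0 := by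
    have step : ∀ h ∈ Finset.Icc 1 b, Polynomial.X ^ (b - h) *
        Polynomial.C (∑ i ∈ S.filter (fun i => i ≤ -(h : ℤ)),
          ω i * ∑ g ∈ (walkSet S n).filter (fun g => psum g n = -(h : ℤ) - i),
            ∏ j, ω (g j)) =
        ∑ i ∈ S, ∑ g ∈ walkSet S n,
          if (i ≤ -(h : ℤ) ∧ psum g n = -(h : ℤ) - i) then
            Polynomial.X ^ (b - h) * Polynomial.C (ω i * ∏ j, ω (g j)) else 0 := by
      intro h _
      simp only [Finset.sum_filter, map_sum, apply_ite Polynomial.C, map_mul, map_zero,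
        Finset.mul_sum, mul_ite, mul_zero, ite_and, ite_sum]
    rw [Finset.sum_congr rfl step, Finset.sum_comm]
    have swap2 : ∀ i ∈ S, (∑ h ∈ Finset.Icc 1 b, ∑ g ∈ walkSet S n,
        if (i ≤ -(h : ℤ) ∧ psum g n = -(h : ℤ) - i) then
          Polynomial.X ^ (b - h) * Polynomial.C (ω i * ∏ j, ω (g j)) else 0) =
        ∑ g ∈ walkSet S n, ∑ h ∈ Finset.Icc 1 b,
        if (i ≤ -(h : ℤ) ∧ psum g n = -(h : ℤ) - i) then
          Polynomial.X ^ (b - h) * Polynomial.C (ω i * ∏ j, ω (g j)) else 0 :=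
      fun i _ => Finset.sum_comm
    rw [Finset.sum_congr rfl swap2, Finset.sum_comm]
  rw [e4]
  refine Finset.sum_congr rfl fun g hg => Finset.sum_congr rfl fun s hs => ?_
  have hp : 0 ≤ psum g n := psum_nonneg_of_mem hg n
  have hbs : -(b : ℤ) ≤ s := hrange s hs
  by_cases hneg : 0 ≤ psum g n + s
  · rw [if_neg (by omega)]
    refine (Finset.sum_eq_zero fun h hh => ?_).symm
    rw [if_neg]
    rintro ⟨h1, h2⟩
    simp only [Finset.mem_Icc] at hh
    omega
  · rw [if_pos (by omega)]
    set h0 : ℕ := (-(psum g n + s)).toNat with hh0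
    have hmem : h0 ∈ Finset.Icc 1 b := by
      simp only [Finset.mem_Icc]
      omega
    rw [Finset.sum_eq_single_of_mem h0 hmem ?uniq]
    case uniq =>
      intro h hh hne
      rw [if_neg]
      rintro ⟨h1, h2⟩
      exact hne (by omega)
    rw [if_pos (by constructor <;> omega)]
    have hexp : ((b : ℤ) + s + psum g n).toNat = b - h0 := by omega
    rw [hexp, map_mul, map_mul]
    ring

lemma walkSet_zero (S : Finset ℤ) : walkSet S 0 = {fun i => i.elim0} := by
  ext f
  simp only [Finset.mem_singleton, mem_walkSet]
  constructor
  · intro _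
    funext i
    exact i.elim0
  · intro _
    exact ⟨fun i => i.elim0, fun m => by simp [psum]⟩

lemma coeff_zero_Wfull {K : Type*} [Field K] (S : Finset ℤ) (ω : ℤ → K) :
    (PowerSeries.constantCoeff (R := Polynomial K)) (Wfull S ω) = 1 := by
  rw [← PowerSeries.coeff_zero_eq_constantCoeff, Wfull, PowerSeries.coeff_mk, walkSet_zero,
    Finset.sum_singleton]
  simp [psum]

/-- The functional equation
`u^b (1 - t P(u)) W(t,u) = u^b - t ∑_{h=1}^{b} u^{b-h} ∑_{i∈S, j≥0, i+j=-h} ω_i W_j(t)`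
for non-negative walks with steps in `S`, where `min S = -b`, `max S = a` and
`P(u) = ∑_{s∈S} ω_s u^s` (everything multiplied through by `u^b`). -/
theorem walk_functional_equation {K : Type*} [Field K] (S : Finset ℤ) (ω : ℤ → K)
    (a b : ℕ) (haS : (a : ℤ) ∈ S) (hbS : (-(b : ℤ)) ∈ S)
    (hrange : ∀ s ∈ S, -(b : ℤ) ≤ s ∧ s ≤ (a : ℤ)) :
    (PowerSeries.C (R := Polynomial K) (Polynomial.X ^ b) -
        PowerSeries.X *
          PowerSeries.C (R := Polynomial K)
            (∑ s ∈ S, Polynomial.C (ω s) * Polynomial.X ^ ((b : ℤ) + s).toNat)) *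
        Wfull S ω =
      PowerSeries.C (R := Polynomial K) (Polynomial.X ^ b) -
        PowerSeries.X *
          ∑ h ∈ Finset.Icc 1 b,
            PowerSeries.C (R := Polynomial K) (Polynomial.X ^ (b - h)) *
              PowerSeries.map Polynomial.C
                (∑ i ∈ S.filter (fun i => i ≤ -(h : ℤ)),
                  PowerSeries.C (R := K) (ω i) * Wh S ω (-(h : ℤ) - i)) := by
  ext n
  rcases n with _ | n
  · simp only [PowerSeries.coeff_zero_eq_constantCoeff, map_mul, map_sub,
      PowerSeries.constantCoeff_C, PowerSeries.constantCoeff_X, zero_mul, sub_zero,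
      coeff_zero_Wfull, mul_one]
  · rw [sub_mul, map_sub, map_sub, PowerSeries.coeff_C_mul, mul_assoc,
      PowerSeries.coeff_succ_X_mul, PowerSeries.coeff_succ_X_mul, PowerSeries.coeff_C_mul,
      PowerSeries.coeff_C]
    rw [if_neg (Nat.succ_ne_zero n)]
    have hkey := key_lemma S ω b n (fun s hs => (hrange s hs).1)
    have hq : (PowerSeries.coeff (R := Polynomial K) n)
        (∑ h ∈ Finset.Icc 1 b,
          PowerSeries.C (R := Polynomial K) (Polynomial.X ^ (b - h)) *
            PowerSeries.map Polynomial.C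
              (∑ i ∈ S.filter (fun i => i ≤ -(h : ℤ)),
                PowerSeries.C (R := K) (ω i) * Wh S ω (-(h : ℤ) - i))) =
        ∑ h ∈ Finset.Icc 1 b, Polynomial.X ^ (b - h) *
          Polynomial.C (∑ i ∈ S.filter (fun i => i ≤ -(h : ℤ)),
            ω i * ∑ g ∈ (walkSet S n).filter (fun g => psum g n = -(h : ℤ) - i),
              ∏ j, ω (g j)) := by
      simp only [map_sum]
      refine Finset.sum_congr rfl fun h _ => ?_
      rw [PowerSeries.coeff_C_mul]
      congr 1
      rw [map_sum]
      refine Finset.sum_congr rfl fun i _ => ?_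
      rw [PowerSeries.coeff_map, PowerSeries.coeff_C_mul]
      simp only [Wh, PowerSeries.coeff_mk]
    rw [hq]
    simp only [Wfull, PowerSeries.coeff_mk] at hkey ⊢
    rw [zero_sub, ← hkey, neg_sub]
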